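/- For every natural number n, Σ_{k=0}^{n} C(n,k)³ = (1/2^n) · Σ_{k=⌈n/2⌉}^{n} C(2k,n) · C(2k,k) · C(2n-2k,n-k), i.e., 2^n · Σ_{k=0}^{n} C(n,k)³ = Σ_{k=0}^{n} C(2k,n) · C(2k,k) · C(2n-2k,n-k). -/

import Mathlib

set_option maxHeartbeats 4000000

open Finset

namespace Stmt6Aux

/-- central binomial step -/
lemma central_step (m : ℕ) :
    (m + 1) * (2 * m + 2).choose (m + 1) = 2 * (2 * m + 1) * (2 * m).choose m := by
  have h1 : (2 * m + 2).choose (m + 1) = (2 * m + 1).choose m + (2 * m + 1).choose (m + 1) :=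
    Nat.choose_succ_succ (2 * m + 1) m
  have h2 : (2 * m + 1).choose (m + 1) = (2 * m + 1).choose m := Nat.choose_symm_half m
  have h3 : (2 * m + 1) * (2 * m).choose m = (2 * m + 1).choose (m + 1) * (m + 1) := by
    simpa using Nat.add_one_mul_choose_eq (2 * m) m
  rw [h1, h2, ← Nat.two_mul]
  calc (m + 1) * (2 * ((2 * m + 1).choose m)) = 2 * ((2 * m + 1).choose (m+1) * (m + 1)) := by
        rw [h2]; ring
    _ = 2 * (2 * m + 1) * (2 * m).choose m := by rw [← h3]; ring

-- polynomial coefficients of the common recurrence, as rationals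
noncomputable def P2 (n : ℕ) : ℚ := ((n : ℚ) + 2) ^ 2
noncomputable def P1 (n : ℕ) : ℚ := -2 * (7 * (n : ℚ) ^ 2 + 21 * n + 16)
noncomputable def P0 (n : ℕ) : ℚ := -32 * ((n : ℚ) + 1) ^ 2

noncomputable def Hq (n k : ℕ) : ℚ :=
  if k ≤ n then 2 ^ n * ((n.choose k : ℚ)) ^ 3 else 0

noncomputable def Tq (n k : ℕ) : ℚ :=
  if k ≤ n then ((2 * k).choose n : ℚ) * ((2 * k).choose k : ℚ)
      * ((2 * (n - k)).choose (n - k) : ℚ)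
  else 0

noncomputable def NH (n k : ℕ) : ℚ :=
  16 * (k:ℚ) ^ 3 - 120 * (k:ℚ) ^ 2 + 312 * k - 288
    + (n:ℚ) * (-72 * (k:ℚ) ^ 2 + 372 * k - 512) + (n:ℚ) ^ 2 * (108 * k - 296) - 56 * (n:ℚ) ^ 3

noncomputable def NT (n k : ℕ) : ℚ :=
  -4 * (8 * (k:ℚ) ^ 4 - 56 * (k:ℚ) ^ 3 + 106 * (k:ℚ) ^ 2 - 68 * k + 14
    + (n:ℚ) * (-28 * (k:ℚ) ^ 3 + 96 * (k:ℚ) ^ 2 - 75 * k + 17)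
    + (n:ℚ) ^ 2 * (20 * (k:ℚ) ^ 2 - 20 * k + 5))

noncomputable def PH (n k : ℕ) : ℚ :=
  if 1 ≤ k ∧ k ≤ n + 2 then
    NH n k * 2 ^ n * (((n + 1).choose (k - 1) : ℚ)) ^ 3 / ((n : ℚ) + 1)
  else 0

noncomputable def PT (n k : ℕ) : ℚ :=
  if n + 2 ≤ 2 * k ∧ k ≤ n + 2 then
    NT n k * ((2 * k - 2).choose n : ℚ) * ((2 * k - 2).choose (k - 1) : ℚ)
      * ((2 * n + 4 - 2 * k).choose (n + 2 - k) : ℚ)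
      / (((n : ℚ) + 1) * (2 * (n : ℚ) + 3 - 2 * k))
  else 0

lemma Hq_zero {n k : ℕ} (h : n < k) : Hq n k = 0 := by
  rw [Hq, if_neg (by omega)]

lemma Tq_zero {n k : ℕ} (h : n < k) : Tq n k = 0 := by
  rw [Tq, if_neg (by omega)]

lemma sum_ext {f : ℕ → ℚ} {a b : ℕ} (hab : a ≤ b) (hf : ∀ k, a ≤ k → f k = 0) :
    ∑ k ∈ Finset.range b, f k = ∑ k ∈ Finset.range a, f k := by
  refine (Finset.sum_subset (Finset.range_subset_range.2 hab) fun x hx hnx => ?_).symm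
  exact hf x (by simpa using hnx)

lemma keyH (n k : ℕ) :
    P2 n * Hq (n + 2) k + P1 n * Hq (n + 1) k + P0 n * Hq n k = PH n (k + 1) - PH n k := by
  have hn1 : ((n : ℚ) + 1) ≠ 0 := by positivity
  rcases Nat.eq_zero_or_pos k with hk0 | hk1
  · -- k = 0
    subst hk0
    rw [Hq, if_pos (by omega), Hq, if_pos (by omega), Hq, if_pos (by omega),
      PH, if_pos (by omega), PH, if_neg (by omega)]
    simp only [Nat.choose_zero_right, Nat.sub_self]
    rw [NH, P2, P1, P0]
    push_cast
    field_simp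
    ring
  rcases lt_or_ge n k with hkn | hkn
  · -- k ≥ n + 1
    rcases Nat.lt_or_ge k (n + 3) with hk3 | hk3
    · rcases (by omega : k = n + 1 ∨ k = n + 2) with rfl | rfl
      · -- k = n + 1
        rw [Hq, if_pos (by omega), Hq, if_pos (by omega), Hq, if_neg (by omega),
          PH, if_pos (by omega), PH, if_pos (by omega)]
        simp only [Nat.add_sub_cancel, Nat.succ_sub_one, Nat.choose_self,
          Nat.choose_succ_self_right]
        rw [NH, NH, P2, P1, P0]
        push_cast
        field_simp
        ring
      · -- k = n + 2
        rw [Hq, if_pos (by omega), Hq, if_neg (by omega), Hq, if_neg (by omega),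
          PH, if_neg (by omega), PH, if_pos (by omega)]
        simp only [Nat.add_sub_cancel, Nat.succ_sub_one, Nat.choose_self]
        rw [NH, P2, P1, P0]
        push_cast
        field_simp
        ring
    · -- k ≥ n + 3
      rw [Hq, if_neg (by omega), Hq, if_neg (by omega), Hq, if_neg (by omega),
        PH, if_neg (by omega), PH, if_neg (by omega)]
      ring
  · -- 1 ≤ k ≤ n : generic case
    obtain ⟨j, rfl⟩ : ∃ j, k = j + 1 := ⟨k - 1, by omega⟩
    obtain ⟨d, rfl⟩ : ∃ d, n = (j + 1) + d := ⟨n - (j + 1), by omega⟩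
    set n := j + 1 + d with hn
    have r1 : (n + 1).choose (j+1) * (d + 1) = n.choose (j+1) * (n + 1) := by
      have := Nat.choose_mul_succ_eq n (j+1)
      rw [show n + 1 - (j+1) = d + 1 by omega] at this
      omega
    have r2 : (n + 2).choose (j+1) * (d + 2) = (n + 1).choose (j+1) * (n + 2) := by
      have := Nat.choose_mul_succ_eq (n+1) (j+1)
      rw [show n + 1 + 1 - (j+1) = d + 2 by omega, show n + 1 + 1 = n + 2 from rfl] at this
      omega
    have r3 : (n + 1).choose j * (d + 2) = (n + 1).choose (j+1) * (j + 1) := by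
      have := Nat.choose_succ_right_eq (n+1) j
      rw [show n + 1 - j = d + 2 by omega] at this
      omega
    have hbpos : 0 < (n + 1).choose (j+1) := Nat.choose_pos (by omega)
    have hb : ((n + 1).choose (j+1) : ℚ) ≠ 0 := by exact_mod_cast hbpos.ne'
    have hd1 : ((d : ℚ) + 1) ≠ 0 := by positivity
    have hd2 : ((d : ℚ) + 2) ≠ 0 := by positivity
    have ha : (n.choose (j+1) : ℚ)
        = ((n + 1).choose (j+1) : ℚ) * ((d : ℚ) + 1) / ((n : ℚ) + 1) := by
      have : ((n + 1).choose (j+1) * (d + 1) : ℚ) = (n.choose (j+1) : ℚ) * ((n:ℚ) + 1) := by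
        exact_mod_cast congrArg (Nat.cast : ℕ → ℚ) r1
      field_simp
      linarith [this]
    have hc : ((n + 2).choose (j+1) : ℚ)
        = ((n + 1).choose (j+1) : ℚ) * ((n : ℚ) + 2) / ((d : ℚ) + 2) := by
      have : ((n + 2).choose (j+1) * (d + 2) : ℚ) = ((n+1).choose (j+1) : ℚ) * ((n:ℚ) + 2) := by
        exact_mod_cast congrArg (Nat.cast : ℕ → ℚ) r2
      field_simp
      linarith [this]
    have he : ((n + 1).choose j : ℚ)
        = ((n + 1).choose (j+1) : ℚ) * ((j : ℚ) + 1) / ((d : ℚ) + 2) := by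
      have : ((n + 1).choose j * (d + 2) : ℚ) = ((n+1).choose (j+1) : ℚ) * ((j:ℚ) + 1) := by
        exact_mod_cast congrArg (Nat.cast : ℕ → ℚ) r3
      field_simp
      linarith [this]
    rw [Hq, if_pos (by omega), Hq, if_pos (by omega), Hq, if_pos (by omega),
      PH, if_pos (by omega), PH, if_pos (by omega)]
    simp only [Nat.add_sub_cancel, Nat.succ_sub_one]
    rw [ha, hc, he, NH, NH, P2, P1, P0, hn]
    push_cast
    field_simp
    ring

lemma central_step' (m : ℕ) :
    (m + 1) * ((2 * (m + 1)).choose (m + 1)) = 2 * (2 * m + 1) * ((2 * m).choose m) := by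
  have := central_step m
  rwa [show 2 * m + 2 = 2 * (m + 1) by ring] at this

lemma Tq_zero2 {n k : ℕ} (h : 2 * k < n) : Tq n k = 0 := by
  rw [Tq]
  split_ifs with h'
  · rw [Nat.choose_eq_zero_of_lt h]
    push_cast
    ring
  · rfl

lemma Tq_eq {n k d : ℕ} (h : n = k + d) :
    Tq n k = ((2 * k).choose n : ℚ) * ((2 * k).choose k : ℚ) * ((2 * d).choose d : ℚ) := by
  subst h
  rw [Tq, if_pos (by omega), show k + d - k = d by omega]

lemma PT_eq {n k c j : ℕ} (h1 : n + 2 = k + c) (h2 : n + 2 ≤ 2 * k) (hj : k = j + 1) :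
    PT n k = NT n k * ((2 * j).choose n : ℚ) * ((2 * j).choose j : ℚ)
      * ((2 * c).choose c : ℚ) / (((n : ℚ) + 1) * (2 * (n : ℚ) + 3 - 2 * (k : ℚ))) := by
  rw [PT, if_pos ⟨h2, by omega⟩, show 2 * k - 2 = 2 * j by omega, show k - 1 = j by omega,
    show 2 * n + 4 - 2 * k = 2 * c by omega, show n + 2 - k = c by omega]

lemma keyT (n k : ℕ) :
    P2 n * Tq (n + 2) k + P1 n * Tq (n + 1) k + P0 n * Tq n k = PT n (k + 1) - PT n k := by
  have hn1 : ((n : ℚ) + 1) ≠ 0 := by positivity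
  have hn2 : ((n : ℚ) + 2) ≠ 0 := by positivity
  rcases lt_or_ge n k with hkn | hkn
  · -- k > n
    rcases Nat.lt_or_ge k (n + 3) with hk3 | hk3
    · rcases (by omega : k = n + 1 ∨ k = n + 2) with rfl | rfl
      · -- k = n + 1
        have hPT0 : PT n (n + 1) = NT n (n + 1) * ((2 * n).choose n : ℚ)
            * ((2 * n).choose n : ℚ) * 2 / ((n : ℚ) + 1) := by
          rw [PT_eq (show n + 2 = (n + 1) + 1 from by omega) (by omega) rfl]
          norm_num
          push_cast
          ring
        have hPT2 : PT n (n + 1 + 1) = NT n (n + 2) * ((2 * (n + 1)).choose n : ℚ)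
            * ((2 * (n + 1)).choose (n + 1) : ℚ) / (-((n : ℚ) + 1)) := by
          rw [show n + 1 + 1 = n + 2 from rfl,
            PT_eq (show n + 2 = (n + 2) + 0 from by omega) (by omega)
              (show n + 2 = (n + 1) + 1 from rfl)]
          norm_num
          push_cast
          ring
        rw [Tq_zero (n := n) (k := n + 1) (by omega),
          Tq_eq (show n + 1 = (n + 1) + 0 from by omega),
          Tq_eq (show n + 2 = (n + 1) + 1 from by omega), hPT0, hPT2, div_neg]
        have h1 := Nat.choose_succ_right_eq (2 * (n + 1)) n
        rw [show 2 * (n + 1) - n = n + 2 from by omega] at h1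
        have hD1 : ((2 * (n + 1)).choose n : ℚ)
            = ((2 * (n + 1)).choose (n + 1) : ℚ) * ((n : ℚ) + 1) / ((n : ℚ) + 2) := by
          have := congrArg (Nat.cast : ℕ → ℚ) h1
          push_cast at this
          field_simp
          linarith
        have h2 := Nat.choose_succ_right_eq (2 * (n + 1)) (n + 1)
        rw [show 2 * (n + 1) - (n + 1) = n + 1 from by omega,
          show n + 1 + 1 = n + 2 from rfl] at h2
        have hC1 : ((2 * (n + 1)).choose (n + 2) : ℚ)
            = ((2 * (n + 1)).choose (n + 1) : ℚ) * ((n : ℚ) + 1) / ((n : ℚ) + 2) := by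
          have := congrArg (Nat.cast : ℕ → ℚ) h2
          push_cast at this
          field_simp
          linarith
        have hc := central_step' n
        have hB : ((2 * (n + 1)).choose (n + 1) : ℚ)
            = 2 * (2 * (n : ℚ) + 1) * ((2 * n).choose n : ℚ) / ((n : ℚ) + 1) := by
          have := congrArg (Nat.cast : ℕ → ℚ) hc
          push_cast at this
          field_simp
          linarith
        rw [hC1, hD1, hB, NT, NT, P2, P1]
        have e2 : (2 * (n : ℚ) + 1) ≠ 0 := by positivity
        push_cast
        field_simp
        simp only [Nat.choose_zero_right, Nat.choose_one_right, Nat.cast_ofNat, Nat.cast_one]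
        ring
      · -- k = n + 2
        have hPT2 : PT n (n + 2) = NT n (n + 2) * ((2 * (n + 1)).choose n : ℚ)
            * ((2 * (n + 1)).choose (n + 1) : ℚ) / (-((n : ℚ) + 1)) := by
          rw [PT_eq (show n + 2 = (n + 2) + 0 from by omega) (by omega)
              (show n + 2 = (n + 1) + 1 from rfl)]
          norm_num
          push_cast
          ring
        rw [Tq_zero (n := n + 1) (k := n + 2) (by omega),
          Tq_zero (n := n) (k := n + 2) (by omega),
          Tq_eq (show n + 2 = (n + 2) + 0 from by omega), hPT2, div_neg, PT,
          if_neg (by omega)]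
        have h1 := Nat.choose_succ_right_eq (2 * (n + 1)) n
        rw [show 2 * (n + 1) - n = n + 2 from by omega] at h1
        have hD1 : ((2 * (n + 1)).choose n : ℚ)
            = ((2 * (n + 1)).choose (n + 1) : ℚ) * ((n : ℚ) + 1) / ((n : ℚ) + 2) := by
          have := congrArg (Nat.cast : ℕ → ℚ) h1
          push_cast at this
          field_simp
          linarith
        have hc := central_step' (n + 1)
        rw [show n + 1 + 1 = n + 2 from rfl] at hc
        have hE : ((2 * (n + 2)).choose (n + 2) : ℚ)
            = 2 * (2 * (n : ℚ) + 3) * ((2 * (n + 1)).choose (n + 1) : ℚ) / ((n : ℚ) + 2) := by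
          have := congrArg (Nat.cast : ℕ → ℚ) hc
          push_cast at this
          field_simp
          linarith
        rw [hE, hD1, NT, P2]
        have e2 : (2 * (n : ℚ) + 3) ≠ 0 := by positivity
        push_cast
        field_simp
        simp only [Nat.choose_zero_right, Nat.choose_one_right, Nat.cast_ofNat, Nat.cast_one]
        ring
    · -- k ≥ n + 3 : everything vanishes
      rw [Tq_zero (by omega), Tq_zero (by omega), Tq_zero (by omega),
        PT, if_neg (by omega), PT, if_neg (by omega)]
      ring
  rcases lt_or_ge (2 * k) n with h2k | h2k
  · -- 2k < n : everything vanishes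
    rw [Tq_zero2 (by omega), Tq_zero2 (by omega), Tq_zero2 (by omega),
      PT, if_neg (by omega), PT, if_neg (by omega)]
    ring
  rcases (by omega : n = 2 * k ∨ n = 2 * k - 1 ∧ 1 ≤ k ∨ n + 2 ≤ 2 * k) with hn | ⟨hn, hk1⟩ | hn
  · -- n = 2k
    subst hn
    have hPT1 : PT (2 * k) (k + 1) = NT (2 * k) (k + 1) * ((2 * k).choose (2 * k) : ℚ)
        * ((2 * k).choose k : ℚ) * ((2 * (k + 1)).choose (k + 1) : ℚ)
        / ((2 * (k : ℚ) + 1) * (2 * (k : ℚ) + 1)) := by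
      rw [PT_eq (show 2 * k + 2 = (k + 1) + (k + 1) from by omega) (by omega) rfl]
      push_cast
      ring
    rw [Tq_zero2 (by omega), Tq_zero2 (by omega), Tq_eq (show 2 * k = k + k from by omega),
      hPT1, PT, if_neg (by omega), Nat.choose_self]
    have hc := central_step' k
    have hck : ((2 * (k + 1)).choose (k + 1) : ℚ)
        = 2 * (2 * (k : ℚ) + 1) * ((2 * k).choose k : ℚ) / ((k : ℚ) + 1) := by
      have := congrArg (Nat.cast : ℕ → ℚ) hc
      push_cast at this
      field_simp
      linarith
    rw [hck, NT, P0]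
    have e1 : ((k : ℚ) + 1) ≠ 0 := by positivity
    have e2 : (2 * (k : ℚ) + 1) ≠ 0 := by positivity
    push_cast
    field_simp
    ring
  · -- n = 2k - 1
    obtain ⟨j, rfl⟩ : ∃ j, k = j + 1 := ⟨k - 1, by omega⟩
    have hn' : n = 2 * j + 1 := by omega
    subst hn'
    have h1 : (2 * (j + 1)).choose (2 * j + 1 + 1) = 1 := by
      rw [show 2 * j + 1 + 1 = 2 * (j + 1) from by ring, Nat.choose_self]
    have h2 : (2 * (j + 1)).choose (2 * j + 1) = 2 * (j + 1) := by
      rw [← Nat.choose_symm (by omega), show 2 * (j + 1) - (2 * j + 1) = 1 from by omega,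
        Nat.choose_one_right]
    have hPT1 : PT (2 * j + 1) (j + 1 + 1) = NT (2 * j + 1) (j + 2)
        * ((2 * (j + 1)).choose (2 * j + 1) : ℚ) * ((2 * (j + 1)).choose (j + 1) : ℚ)
        * ((2 * (j + 1)).choose (j + 1) : ℚ)
        / ((2 * (j : ℚ) + 2) * (2 * (j : ℚ) + 1)) := by
      rw [show j + 1 + 1 = j + 2 from rfl,
        PT_eq (show 2 * j + 1 + 2 = (j + 2) + (j + 1) from by omega) (by omega)
          (show j + 2 = (j + 1) + 1 from rfl)]
      push_cast
      ring
    rw [Tq_zero2 (by omega), Tq_eq (show 2 * j + 1 + 1 = (j + 1) + (j + 1) from by omega),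
      Tq_eq (show 2 * j + 1 = (j + 1) + j from by omega), hPT1, PT, if_neg (by omega),
      h1, h2]
    have hc := central_step' j
    have hcj : ((2 * (j + 1)).choose (j + 1) : ℚ)
        = 2 * (2 * (j : ℚ) + 1) * ((2 * j).choose j : ℚ) / ((j : ℚ) + 1) := by
      have := congrArg (Nat.cast : ℕ → ℚ) hc
      push_cast at this
      have e1 : ((j : ℚ) + 1) ≠ 0 := by positivity
      field_simp
      linarith
    rw [hcj, NT, P1, P0]
    have e1 : ((j : ℚ) + 1) ≠ 0 := by positivity
    have e2 : (2 * (j : ℚ) + 1) ≠ 0 := by positivity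
    push_cast
    field_simp
    ring
  · -- generic case
    obtain ⟨d, hd⟩ : ∃ d, n = k + d := ⟨n - k, by omega⟩
    obtain ⟨e, he⟩ : ∃ e, k = d + e + 2 := ⟨k - d - 2, by omega⟩
    have hnq : (n : ℚ) = 2 * (d : ℚ) + (e : ℚ) + 2 := by
      exact_mod_cast congrArg (Nat.cast : ℕ → ℚ) (show n = 2 * d + e + 2 from by omega)
    have hkq : (k : ℚ) = (d : ℚ) + (e : ℚ) + 2 := by
      exact_mod_cast congrArg (Nat.cast : ℕ → ℚ) (show k = d + e + 2 from by omega)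
    -- binomial relations
    have hx1 := Nat.choose_succ_right_eq (2 * k) n
    rw [show 2 * k - n = e + 2 from by omega] at hx1
    have X1 : ((2 * k).choose (n + 1) : ℚ)
        = ((2 * k).choose n : ℚ) * ((e : ℚ) + 2) / (2 * (d : ℚ) + (e : ℚ) + 3) := by
      have h := congrArg (Nat.cast : ℕ → ℚ) hx1
      push_cast at h
      rw [hnq] at h
      have : (2 * (d : ℚ) + (e : ℚ) + 3) ≠ 0 := by positivity
      field_simp
      linear_combination h
    have hx2 := Nat.choose_succ_right_eq (2 * k) (n + 1)
    rw [show 2 * k - (n + 1) = e + 1 from by omega, show n + 1 + 1 = n + 2 from rfl] at hx2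
    have X2 : ((2 * k).choose (n + 2) : ℚ)
        = ((2 * k).choose (n + 1) : ℚ) * ((e : ℚ) + 1) / (2 * (d : ℚ) + (e : ℚ) + 4) := by
      have h := congrArg (Nat.cast : ℕ → ℚ) hx2
      push_cast at h
      rw [hnq] at h
      have : (2 * (d : ℚ) + (e : ℚ) + 4) ≠ 0 := by positivity
      field_simp
      linear_combination h
    have hy1 := central_step' d
    have Y1 : ((2 * (d + 1)).choose (d + 1) : ℚ)
        = 2 * (2 * (d : ℚ) + 1) * ((2 * d).choose d : ℚ) / ((d : ℚ) + 1) := by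
      have h := congrArg (Nat.cast : ℕ → ℚ) hy1
      push_cast at h
      have : ((d : ℚ) + 1) ≠ 0 := by positivity
      field_simp
      linear_combination h
    have hy2 := central_step' (d + 1)
    rw [show d + 1 + 1 = d + 2 from rfl] at hy2
    have Y2 : ((2 * (d + 2)).choose (d + 2) : ℚ)
        = 2 * (2 * (d : ℚ) + 3) * ((2 * (d + 1)).choose (d + 1) : ℚ) / ((d : ℚ) + 2) := by
      have h := congrArg (Nat.cast : ℕ → ℚ) hy2
      push_cast at h
      have : ((d : ℚ) + 2) ≠ 0 := by positivity
      field_simp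
      linear_combination h
    have hz := central_step' (d + e + 1)
    rw [show d + e + 1 + 1 = d + e + 2 from rfl, show 2 * (d + e + 2) = 2 * k from by omega,
      show d + e + 2 = k from by omega] at hz
    have Z2 : ((2 * (d + e + 1)).choose (d + e + 1) : ℚ)
        = ((d : ℚ) + (e : ℚ) + 2) * ((2 * k).choose k : ℚ)
          / (2 * (2 * ((d : ℚ) + (e : ℚ) + 1) + 1)) := by
      have h := congrArg (Nat.cast : ℕ → ℚ) hz
      push_cast at h
      rw [hkq] at h
      have : (2 * (2 * ((d : ℚ) + (e : ℚ) + 1) + 1)) ≠ 0 := by positivity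
      rw [eq_div_iff this]
      linear_combination -h
    have hw1 := Nat.choose_mul_succ_eq (2 * (d + e + 1)) n
    rw [show 2 * (d + e + 1) + 1 - n = e + 1 from by omega] at hw1
    have Z1 : ((2 * (d + e + 1)).choose n : ℚ)
        = ((2 * (d + e + 1) + 1).choose n : ℚ) * ((e : ℚ) + 1)
          / (2 * ((d : ℚ) + (e : ℚ) + 1) + 1) := by
      have h := congrArg (Nat.cast : ℕ → ℚ) hw1
      push_cast at h
      have : (2 * ((d : ℚ) + (e : ℚ) + 1) + 1) ≠ 0 := by positivity
      field_simp
      linear_combination h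
    have hw2 := Nat.choose_mul_succ_eq (2 * (d + e + 1) + 1) n
    rw [show 2 * (d + e + 1) + 1 + 1 - n = e + 2 from by omega,
      show 2 * (d + e + 1) + 1 + 1 = 2 * k from by omega] at hw2
    have W : ((2 * (d + e + 1) + 1).choose n : ℚ)
        = ((2 * k).choose n : ℚ) * ((e : ℚ) + 2) / (2 * ((d : ℚ) + (e : ℚ) + 2)) := by
      have h := congrArg (Nat.cast : ℕ → ℚ) hw2
      push_cast at h
      rw [hkq] at h
      have : (2 * ((d : ℚ) + (e : ℚ) + 2)) ≠ 0 := by positivity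
      field_simp
      linear_combination h
    rw [Tq_eq (show n + 2 = k + (d + 2) from by omega),
      Tq_eq (show n + 1 = k + (d + 1) from by omega), Tq_eq hd,
      PT_eq (show n + 2 = (k + 1) + (d + 1) from by omega) (by omega) rfl,
      PT_eq (show n + 2 = k + (d + 2) from by omega) (by omega)
        (show k = (d + e + 1) + 1 from by omega),
      X2, X1, Y2, Y1, Z1, W, Z2, NT, NT, P2, P1, P0]
    have q1 : ((d : ℚ) + 1) ≠ 0 := by positivity
    have q2 : ((d : ℚ) + 2) ≠ 0 := by positivity
    have q3 : (2 * (d : ℚ) + (e : ℚ) + 3) ≠ 0 := by positivity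
    have q4 : (2 * (d : ℚ) + (e : ℚ) + 4) ≠ 0 := by positivity
    have q5 : (2 * ((d : ℚ) + (e : ℚ) + 1) + 1) ≠ 0 := by positivity
    have q6 : ((d : ℚ) + (e : ℚ) + 2) ≠ 0 := by positivity
    have q7 : (2 * (d : ℚ) + 1) ≠ 0 := by positivity
    have q8 : (2 * (d : ℚ) + 3) ≠ 0 := by positivity
    push_cast
    rw [hnq, hkq]
    rw [show (2:ℚ) * (2 * (d:ℚ) + (e:ℚ) + 2) + 3 - 2 * ((d:ℚ) + (e:ℚ) + 2 + 1)
        = 2 * (d:ℚ) + 1 from by ring,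
      show (2:ℚ) * (2 * (d:ℚ) + (e:ℚ) + 2) + 3 - 2 * ((d:ℚ) + (e:ℚ) + 2)
        = 2 * (d:ℚ) + 3 from by ring]
    field_simp
    ring

noncomputable def gH (n : ℕ) : ℚ := ∑ k ∈ Finset.range (n + 3), Hq n k
noncomputable def gT (n : ℕ) : ℚ := ∑ k ∈ Finset.range (n + 3), Tq n k

lemma recH (n : ℕ) : P2 n * gH (n + 2) + P1 n * gH (n + 1) + P0 n * gH n = 0 := by
  have tele := Finset.sum_range_sub (fun k => PH n k) (n + 3)
  have hsum : ∑ k ∈ Finset.range (n + 3),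
      (P2 n * Hq (n + 2) k + P1 n * Hq (n + 1) k + P0 n * Hq n k)
      = PH n (n + 3) - PH n 0 := by
    rw [← tele]; exact Finset.sum_congr rfl fun k _ => keyH n k
  have h3 : PH n (n + 3) = 0 := by rw [PH, if_neg]; omega
  have h0 : PH n 0 = 0 := by rw [PH, if_neg]; omega
  have e2 : gH (n + 2) = ∑ k ∈ Finset.range (n + 3), Hq (n + 2) k := by
    rw [gH]; refine sum_ext ?_ fun k hk => Hq_zero ?_ <;> omega
  have e1 : gH (n + 1) = ∑ k ∈ Finset.range (n + 3), Hq (n + 1) k := by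
    rw [gH]; refine sum_ext ?_ fun k hk => Hq_zero ?_ <;> omega
  rw [e2, e1, gH, Finset.mul_sum, Finset.mul_sum, Finset.mul_sum,
    ← Finset.sum_add_distrib, ← Finset.sum_add_distrib, hsum, h3, h0]
  ring

lemma recT (n : ℕ) : P2 n * gT (n + 2) + P1 n * gT (n + 1) + P0 n * gT n = 0 := by
  have tele := Finset.sum_range_sub (fun k => PT n k) (n + 3)
  have hsum : ∑ k ∈ Finset.range (n + 3),
      (P2 n * Tq (n + 2) k + P1 n * Tq (n + 1) k + P0 n * Tq n k)
      = PT n (n + 3) - PT n 0 := by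
    rw [← tele]; exact Finset.sum_congr rfl fun k _ => keyT n k
  have h3 : PT n (n + 3) = 0 := by rw [PT, if_neg]; omega
  have h0 : PT n 0 = 0 := by rw [PT, if_neg]; omega
  have e2 : gT (n + 2) = ∑ k ∈ Finset.range (n + 3), Tq (n + 2) k := by
    rw [gT]; refine sum_ext ?_ fun k hk => Tq_zero ?_ <;> omega
  have e1 : gT (n + 1) = ∑ k ∈ Finset.range (n + 3), Tq (n + 1) k := by
    rw [gT]; refine sum_ext ?_ fun k hk => Tq_zero ?_ <;> omega
  rw [e2, e1, gT, Finset.mul_sum, Finset.mul_sum, Finset.mul_sum,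
    ← Finset.sum_add_distrib, ← Finset.sum_add_distrib, hsum, h3, h0]
  ring

lemma g_eq : ∀ n : ℕ, gH n = gT n ∧ gH (n + 1) = gT (n + 1) := by
  intro n
  induction n with
  | zero =>
    constructor
    · show gH 0 = gT 0
      rw [gH, gT]
      simp [Finset.sum_range_succ, Hq, Tq]
    · show gH 1 = gT 1
      rw [gH, gT]
      norm_num [Finset.sum_range_succ, Hq, Tq, Nat.choose]
  | succ m ih =>
    refine ⟨ih.2, ?_⟩
    have h1 := recH m
    have h2 := recT m
    rw [ih.1, ih.2] at h1
    have hp2 : P2 m ≠ 0 := by rw [P2]; positivity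
    have : P2 m * gH (m + 2) = P2 m * gT (m + 2) := by linarith
    exact mul_left_cancel₀ hp2 this

end Stmt6Aux

theorem stmt6 (n : ℕ) :
    2 ^ n * ∑ k ∈ Finset.range (n + 1), (n.choose k) ^ 3 =
      ∑ k ∈ Finset.range (n + 1),
        ((2 * k).choose n) * ((2 * k).choose k) * ((2 * n - 2 * k).choose (n - k)) := by
  have key := (Stmt6Aux.g_eq n).1
  have hL : ((2 ^ n * ∑ k ∈ Finset.range (n + 1), (n.choose k) ^ 3 : ℕ) : ℚ)
      = Stmt6Aux.gH n := by
    rw [Stmt6Aux.gH,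
      Stmt6Aux.sum_ext (f := fun k => Stmt6Aux.Hq n k) (show n + 1 ≤ n + 3 by omega)
      (fun k hk => Stmt6Aux.Hq_zero (by omega))]
    push_cast
    rw [Finset.mul_sum]
    refine (Finset.sum_congr rfl fun k hk => ?_).symm
    have hk' : k ≤ n := by simpa [Nat.lt_succ_iff] using hk
    rw [Stmt6Aux.Hq, if_pos hk']
  have hR : ((∑ k ∈ Finset.range (n + 1),
      ((2 * k).choose n) * ((2 * k).choose k) * ((2 * n - 2 * k).choose (n - k)) : ℕ) : ℚ)
      = Stmt6Aux.gT n := by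
    rw [Stmt6Aux.gT,
      Stmt6Aux.sum_ext (f := fun k => Stmt6Aux.Tq n k) (show n + 1 ≤ n + 3 by omega)
      (fun k hk => Stmt6Aux.Tq_zero (by omega))]
    push_cast
    refine Finset.sum_congr rfl fun k hk => ?_
    have hk' : k ≤ n := by simpa [Nat.lt_succ_iff] using hk
    rw [Stmt6Aux.Tq, if_pos hk', show 2 * (n - k) = 2 * n - 2 * k by omega]
  have := hL.trans (key.trans hR.symm)
  exact_mod_cast this
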